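/- arXiv:1610.06726 — 2 statements merged into one kernel-verified Lean document; each statement's English description precedes it below -/
import Mathlib

section
/- Let d ≥ 1, α ∈ (0,1] and β ∈ (0, α). There is a constant C depending only on d, α and β such that for every bounded continuous f : ℝ^d → ℝ with finite Hölder seminorm [f]_{C^α} and every T ∈ (0,1], ‖f − P_T f‖_{C^β} ≤ C T^{(α−β)/2} ‖f‖_{C^α}, where ‖h‖_{C^γ} := sup_x |h(x)| + [h]_{C^γ}. -/
open scoped ENNReal

/-- The sup norm `sup_x |f x|`, valued in `ℝ≥0∞`. -/
noncomputable def supN {X : Type*} (f : X → ℝ) : ℝ≥0∞ :=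
  ⨆ x, ENNReal.ofReal |f x|

/-- The Hölder seminorm `[f]_{C^γ} = sup_{x ≠ y} |f x - f y| / |x - y|^γ`, valued in `ℝ≥0∞`. -/
noncomputable def hSemi {X : Type*} [MetricSpace X] (γ : ℝ) (f : X → ℝ) : ℝ≥0∞ :=
  ⨆ (x : X) (y : X) (_ : x ≠ y), ENNReal.ofReal (|f x - f y| / dist x y ^ γ)

/-- The Hölder norm `‖f‖_{C^γ} = sup_x |f x| + [f]_{C^γ}`. -/
noncomputable def hNorm {X : Type*} [MetricSpace X] (γ : ℝ) (f : X → ℝ) : ℝ≥0∞ :=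
  supN f + hSemi γ f

/-- The heat semigroup on `ℝ^d`:
`(P_t f)(x) = ∫ (4πt)^{-d/2} exp(-|x-y|²/(4t)) f(y) dy`. -/
noncomputable def heat (d : ℕ) (t : ℝ) (f : EuclideanSpace ℝ (Fin d) → ℝ)
    (x : EuclideanSpace ℝ (Fin d)) : ℝ :=
  ∫ y, (4 * Real.pi * t) ^ (-(d : ℝ) / 2) * Real.exp (-‖x - y‖ ^ 2 / (4 * t)) * f y

open MeasureTheory Real

local notation "E" d => EuclideanSpace ℝ (Fin d)

lemma aux_integrable_rexp (d : ℕ) {b : ℝ} (hb : 0 < b) :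
    Integrable (fun v : E d => rexp (-b * ‖v‖ ^ 2)) := by
  have h := (GaussianFourier.integrable_cexp_neg_mul_sq_norm_add (b := (b : ℂ))
    (by simpa using hb) 0 (0 : E d)).norm
  refine h.congr ?_
  filter_upwards with v
  simp [Complex.norm_exp, ← Complex.ofReal_pow]

lemma aux_gbound (α : ℝ) (hα0 : 0 < α) (hα1 : α ≤ 1) (r : ℝ) (hr : 0 ≤ r) :
    rexp (-(1/4) * r ^ 2) * r ^ α ≤ rexp 2 * rexp (-(1/8) * r ^ 2) := by
  have h1 : r ^ α ≤ rexp r := by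
    rcases le_total r 1 with h | h
    · exact le_trans (Real.rpow_le_one hr h hα0.le) (Real.one_le_exp hr)
    · calc r ^ α ≤ r ^ (1 : ℝ) := Real.rpow_le_rpow_of_exponent_le h hα1
        _ = r := Real.rpow_one r
        _ ≤ rexp r := by linarith [Real.add_one_le_exp r]
  calc rexp (-(1/4) * r ^ 2) * r ^ α ≤ rexp (-(1/4) * r ^ 2) * rexp r :=
        mul_le_mul_of_nonneg_left h1 (Real.exp_nonneg _)
    _ = rexp (-(1/4) * r ^ 2 + r) := (Real.exp_add _ _).symm
    _ ≤ rexp (2 + -(1/8) * r ^ 2) := by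
        apply Real.exp_le_exp.2; nlinarith [sq_nonneg (r - 4)]
    _ = rexp 2 * rexp (-(1/8) * r ^ 2) := Real.exp_add _ _

lemma aux_gint (d : ℕ) (α : ℝ) (hα0 : 0 < α) (hα1 : α ≤ 1) :
    Integrable (fun w : E d => rexp (-(1/4) * ‖w‖ ^ 2) * ‖w‖ ^ α) := by
  refine Integrable.mono'
    ((aux_integrable_rexp d (by norm_num : (0:ℝ) < 1/8)).const_mul (rexp 2)) ?_ ?_
  · exact ((Real.continuous_exp.comp (by continuity)).mul
      (continuous_norm.rpow_const fun x => Or.inr hα0.le)).aestronglyMeasurable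
  · filter_upwards with w
    rw [Real.norm_eq_abs, abs_of_nonneg (by positivity)]
    exact aux_gbound α hα0 hα1 _ (norm_nonneg w)

lemma aux_key (d : ℕ) (α : ℝ) {T : ℝ} (hT : 0 < T) (z : E d) :
    rexp (-(1/(4*T)) * ‖z‖ ^ 2) * ‖z‖ ^ α
      = T ^ (α/2) * (rexp (-(1/4) * ‖(Real.sqrt T)⁻¹ • z‖ ^ 2) * ‖(Real.sqrt T)⁻¹ • z‖ ^ α) := by
  set s := Real.sqrt T with hs_def
  have hs : 0 < s := Real.sqrt_pos.2 hT
  have hT2 : s ^ 2 = T := Real.sq_sqrt hT.le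
  have hn : ‖s⁻¹ • z‖ = s⁻¹ * ‖z‖ := by
    rw [norm_smul, Real.norm_eq_abs, abs_of_pos (inv_pos.2 hs)]
  have hsq : ‖s⁻¹ • z‖ ^ 2 = ‖z‖ ^ 2 / T := by
    rw [hn, mul_pow, inv_pow, hT2]; ring
  have hsα : s ^ α = T ^ (α/2) := by
    rw [hs_def, Real.sqrt_eq_rpow, ← Real.rpow_mul hT.le]
    congr 1; ring
  have hrp : ‖s⁻¹ • z‖ ^ α = (T ^ (α/2))⁻¹ * ‖z‖ ^ α := by
    rw [hn, Real.mul_rpow (inv_nonneg.2 hs.le) (norm_nonneg z),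
      Real.inv_rpow hs.le, hsα]
  have h1 : -(1/4) * (‖z‖ ^ 2 / T) = -(1/(4*T)) * ‖z‖ ^ 2 := by
    field_simp
  have hTpos : (0:ℝ) < T ^ (α/2) := Real.rpow_pos_of_pos hT _
  rw [hsq, hrp, h1]
  field_simp

lemma aux_momint (d : ℕ) (α : ℝ) (hα0 : 0 < α) (hα1 : α ≤ 1) {T : ℝ} (hT : 0 < T) :
    Integrable (fun z : E d => rexp (-(1/(4*T)) * ‖z‖ ^ 2) * ‖z‖ ^ α) := by
  have hs : (0:ℝ) < Real.sqrt T := Real.sqrt_pos.2 hT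
  have h := (((aux_gint d α hα0 hα1).comp_smul (inv_ne_zero hs.ne')).const_mul (T ^ (α/2)))
  exact h.congr (Filter.Eventually.of_forall fun z => (aux_key d α hT z).symm)

lemma aux_mom (d : ℕ) (α : ℝ) (hα0 : 0 < α) {T : ℝ} (hT : 0 < T) :
    ∫ z : E d, rexp (-(1/(4*T)) * ‖z‖ ^ 2) * ‖z‖ ^ α
      = T ^ ((d:ℝ)/2) * T ^ (α/2) * ∫ w : E d, rexp (-(1/4) * ‖w‖ ^ 2) * ‖w‖ ^ α := by
  have hs : (0:ℝ) < Real.sqrt T := Real.sqrt_pos.2 hT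
  have hsd : Real.sqrt T ^ (Module.finrank ℝ (E d)) = T ^ ((d:ℝ)/2) := by
    rw [finrank_euclideanSpace_fin, Real.sqrt_eq_rpow,
      ← Real.rpow_natCast (T ^ ((1:ℝ)/2)) d, ← Real.rpow_mul hT.le]
    congr 1; push_cast; ring
  calc ∫ z : E d, rexp (-(1/(4*T)) * ‖z‖ ^ 2) * ‖z‖ ^ α
      = ∫ z : E d, T ^ (α/2) *
          (rexp (-(1/4) * ‖(Real.sqrt T)⁻¹ • z‖ ^ 2) * ‖(Real.sqrt T)⁻¹ • z‖ ^ α) :=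
        integral_congr_ae (Filter.Eventually.of_forall fun z => aux_key d α hT z)
    _ = T ^ (α/2) * ∫ z : E d,
          rexp (-(1/4) * ‖(Real.sqrt T)⁻¹ • z‖ ^ 2) * ‖(Real.sqrt T)⁻¹ • z‖ ^ α :=
        integral_const_mul _ _
    _ = T ^ (α/2) * (Real.sqrt T ^ (Module.finrank ℝ (E d)) •
          ∫ w : E d, rexp (-(1/4) * ‖w‖ ^ 2) * ‖w‖ ^ α) := by
        rw [Measure.integral_comp_inv_smul_of_nonneg volume
          (fun w : E d => rexp (-(1/4) * ‖w‖ ^ 2) * ‖w‖ ^ α) hs.le]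
    _ = T ^ ((d:ℝ)/2) * T ^ (α/2) * ∫ w : E d, rexp (-(1/4) * ‖w‖ ^ 2) * ‖w‖ ^ α := by
        rw [hsd, smul_eq_mul]; ring

lemma aux_kint (d : ℕ) {T : ℝ} (hT : 0 < T) :
    ∫ z : E d, rexp (-(1/(4*T)) * ‖z‖ ^ 2) = (4*π*T) ^ ((d:ℝ)/2) := by
  rw [GaussianFourier.integral_rexp_neg_mul_sq_norm (by positivity),
    finrank_euclideanSpace_fin]
  congr 1
  field_simp

set_option maxHeartbeats 2000000 in
theorem stmt_9 (d : ℕ) (hd : 1 ≤ d) (α β : ℝ) (hα0 : 0 < α) (hα1 : α ≤ 1)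
    (hβ0 : 0 < β) (hβα : β < α) :
    ∃ C : ℝ, 0 < C ∧
      ∀ f : EuclideanSpace ℝ (Fin d) → ℝ, Continuous f → supN f < ⊤ → hSemi α f < ⊤ →
        ∀ T : ℝ, 0 < T → T ≤ 1 →
          hNorm β (fun x => f x - heat d T f x) ≤
            ENNReal.ofReal (C * T ^ ((α - β) / 2)) * hNorm α f := by
  set I0 : ℝ := ∫ w : E d, rexp (-(1/4) * ‖w‖ ^ 2) * ‖w‖ ^ α with hI0_def
  have hI0 : 0 ≤ I0 := integral_nonneg fun w => by positivity
  set M : ℝ := (4*π) ^ (-(d:ℝ)/2) * I0 + 1 with hM_def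
  have hM1 : 1 ≤ M := le_add_of_nonneg_left
    (mul_nonneg (Real.rpow_nonneg (by positivity) _) hI0)
  have hM0 : 0 < M := lt_of_lt_of_le one_pos hM1
  set θ : ℝ := (α - β)/α with hθ_def
  have hθ0 : 0 < θ := by apply div_pos <;> linarith
  have hθ1 : 1 - θ = β/α := by rw [hθ_def]; field_simp; ring
  have hθ1' : 0 ≤ 1 - θ := by rw [hθ1]; positivity
  have hMθ : 0 < M ^ θ := Real.rpow_pos_of_pos hM0 _
  set e : ℝ := (α - β)/2 with he_def
  have hexp : α/2 * θ = e := by rw [hθ_def, he_def]; field_simp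
  refine ⟨2 * M ^ θ + M + 1, by nlinarith, ?_⟩
  intro f hf hsup hsemi T hT0 hT1
  set L : ℝ := (hSemi α f).toReal with hL_def
  have hL : 0 ≤ L := ENNReal.toReal_nonneg
  set B : ℝ := (supN f).toReal with hB_def
  have HB : ∀ u, |f u| ≤ B := fun u =>
    (ENNReal.ofReal_le_iff_le_toReal hsup.ne).1 (le_iSup (fun x => ENNReal.ofReal |f x|) u)
  have Hf : ∀ u v, |f u - f v| ≤ L * dist u v ^ α := by
    intro u v
    rcases eq_or_ne u v with rfl | huv
    · simp [Real.zero_rpow hα0.ne']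
    · have h1 : ENNReal.ofReal (|f u - f v| / dist u v ^ α) ≤ hSemi α f :=
        le_iSup_of_le u (le_iSup_of_le v (le_iSup_of_le huv le_rfl))
      have h2 := (ENNReal.ofReal_le_iff_le_toReal hsemi.ne).1 h1
      have hd2 : 0 < dist u v ^ α := Real.rpow_pos_of_pos (dist_pos.2 huv) _
      calc |f u - f v| = |f u - f v| / dist u v ^ α * dist u v ^ α := by field_simp
        _ ≤ L * dist u v ^ α := mul_le_mul_of_nonneg_right h2 hd2.le
  -- the kernel
  set c : ℝ := (4*π*T) ^ (-(d:ℝ)/2) with hc_def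
  have hcpos : 0 < c := Real.rpow_pos_of_pos (by positivity) _
  set k : (E d) → ℝ := fun z => c * rexp (-(1/(4*T)) * ‖z‖ ^ 2) with hk_def
  have hk0 : ∀ z, 0 ≤ k z := fun z => mul_nonneg hcpos.le (Real.exp_nonneg _)
  have hkint : Integrable k := (aux_integrable_rexp d (by positivity)).const_mul c
  have hktot : ∫ z, k z = 1 := by
    have h1 : ∫ z, k z = c * ∫ z : E d, rexp (-(1/(4*T)) * ‖z‖ ^ 2) := by
      simp only [hk_def]; exact integral_const_mul _ _
    rw [h1, aux_kint d hT0, hc_def, ← Real.rpow_add (by positivity),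
      show (-(d:ℝ)/2 + (d:ℝ)/2) = 0 by ring, Real.rpow_zero]
  have hkmomint : Integrable fun z => k z * ‖z‖ ^ α := by
    have h := (aux_momint d α hα0 hα1 hT0).const_mul c
    exact h.congr (Filter.Eventually.of_forall fun z => by simp only [hk_def]; ring)
  have hcT : c * T ^ ((d:ℝ)/2) = (4*π) ^ (-(d:ℝ)/2) := by
    rw [hc_def, show (4*π*T) = (4*π)*T by ring,
      Real.mul_rpow (by positivity) hT0.le, mul_assoc, ← Real.rpow_add hT0,
      show (-(d:ℝ)/2 + (d:ℝ)/2) = 0 by ring, Real.rpow_zero, mul_one]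
  have hmom2 : ∫ z, k z * ‖z‖ ^ α = (4*π) ^ (-(d:ℝ)/2) * I0 * T ^ (α/2) := by
    have h1 : ∫ z, k z * ‖z‖ ^ α
        = c * ∫ z : E d, rexp (-(1/(4*T)) * ‖z‖ ^ 2) * ‖z‖ ^ α := by
      rw [← integral_const_mul]
      exact integral_congr_ae (Filter.Eventually.of_forall fun z => by
        simp only [hk_def]; ring)
    rw [h1, aux_mom d α hα0 hT0, ← hI0_def,
      show c * (T ^ ((d:ℝ)/2) * T ^ (α/2) * I0) = (c * T ^ ((d:ℝ)/2)) * T ^ (α/2) * I0 by ring,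
      hcT]
    ring
  have hTα : 0 ≤ T ^ (α/2) := Real.rpow_nonneg hT0.le _
  have hmomle : ∫ z, k z * ‖z‖ ^ α ≤ M * T ^ (α/2) := by
    rw [hmom2]
    have h2 : (4*π) ^ (-(d:ℝ)/2) * I0 ≤ M := by rw [hM_def]; linarith
    nlinarith
  -- heat rewrite
  have hrw : ∀ x, heat d T f x = ∫ z, k z * f (x - z) := by
    intro x
    have h1 : heat d T f x = ∫ y, (fun z => k z * f (x - z)) (x - y) := by
      simp only [heat]
      refine integral_congr_ae (Filter.Eventually.of_forall fun y => ?_)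
      simp only [hk_def, hc_def, sub_sub_cancel]
      rw [show -‖x - y‖ ^ 2 / (4*T) = -(1/(4*T)) * ‖x - y‖ ^ 2 by ring]
    rw [h1, integral_sub_left_eq_self (fun z => k z * f (x - z)) volume x]
  have hintf : ∀ x, Integrable fun z => k z * f (x - z) := by
    intro x
    have hm : AEStronglyMeasurable (fun z : E d => f (x - z)) volume :=
      (hf.comp (continuous_const.sub continuous_id)).aestronglyMeasurable
    have h := hkint.bdd_mul (c := B) hm (Filter.Eventually.of_forall fun z => by rw [Real.norm_eq_abs]; exact HB _)
    exact h.congr (Filter.Eventually.of_forall fun z => mul_comm _ _)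
  have hdiff : ∀ x, f x - heat d T f x = ∫ z, k z * (f x - f (x - z)) := by
    intro x
    rw [hrw x]
    have h1 : ∫ z, k z * f x = f x := by rw [integral_mul_const, hktot, one_mul]
    calc f x - ∫ z, k z * f (x - z)
        = (∫ z, k z * f x) - ∫ z, k z * f (x - z) := by rw [h1]
      _ = ∫ z, (k z * f x - k z * f (x - z)) :=
          (integral_sub (hkint.mul_const _) (hintf x)).symm
      _ = ∫ z, k z * (f x - f (x - z)) := by
          refine integral_congr_ae (Filter.Eventually.of_forall fun z => ?_); ring
  -- sup bound
  have hsupb : ∀ x, |f x - heat d T f x| ≤ L * (M * T ^ (α/2)) := by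
    intro x
    rw [hdiff x]
    have h1 : |∫ z, k z * (f x - f (x - z))| ≤ ∫ z, |k z * (f x - f (x - z))| := by
      simpa only [Real.norm_eq_abs, Real.norm_eq_abs] using
        norm_integral_le_integral_norm (fun z => k z * (f x - f (x - z)))
    have h2 : ∫ z, |k z * (f x - f (x - z))| ≤ ∫ z, L * (k z * ‖z‖ ^ α) := by
      refine integral_mono_of_nonneg (Filter.Eventually.of_forall fun z => abs_nonneg _)
        (hkmomint.const_mul L) (Filter.Eventually.of_forall fun z => ?_)
      have hd3 : dist x (x - z) = ‖z‖ := by rw [dist_eq_norm, sub_sub_cancel]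
      calc |k z * (f x - f (x - z))| = k z * |f x - f (x - z)| := by
            rw [abs_mul, abs_of_nonneg (hk0 z)]
        _ ≤ k z * (L * ‖z‖ ^ α) := by
            refine mul_le_mul_of_nonneg_left ?_ (hk0 z)
            have h4 := Hf x (x - z); rwa [hd3] at h4
        _ = L * (k z * ‖z‖ ^ α) := by ring
    have h3 : ∫ z, L * (k z * ‖z‖ ^ α) = L * ∫ z, k z * ‖z‖ ^ α := integral_const_mul _ _
    calc |∫ z, k z * (f x - f (x - z))|
        ≤ ∫ z, L * (k z * ‖z‖ ^ α) := h1.trans h2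
      _ = L * ∫ z, k z * ‖z‖ ^ α := h3
      _ ≤ L * (M * T ^ (α/2)) := mul_le_mul_of_nonneg_left hmomle hL
  -- Hölder contraction of the heat part
  have hheatlip : ∀ x x', |heat d T f x - heat d T f x'| ≤ L * dist x x' ^ α := by
    intro x x'
    rw [hrw x, hrw x']
    have h0 : (∫ z, k z * f (x - z)) - ∫ z, k z * f (x' - z)
        = ∫ z, k z * (f (x - z) - f (x' - z)) := by
      rw [← integral_sub (hintf x) (hintf x')]
      exact integral_congr_ae (Filter.Eventually.of_forall fun z => by ring)
    rw [h0]
    have h1 : |∫ z, k z * (f (x - z) - f (x' - z))|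
        ≤ ∫ z, |k z * (f (x - z) - f (x' - z))| := by
      simpa only [Real.norm_eq_abs, Real.norm_eq_abs] using
        norm_integral_le_integral_norm (fun z => k z * (f (x - z) - f (x' - z)))
    have h2 : ∫ z, |k z * (f (x - z) - f (x' - z))| ≤ ∫ z, k z * (L * dist x x' ^ α) := by
      refine integral_mono_of_nonneg (Filter.Eventually.of_forall fun z => abs_nonneg _)
        (hkint.mul_const _) (Filter.Eventually.of_forall fun z => ?_)
      have hd3 : dist (x - z) (x' - z) = dist x x' := by
        rw [dist_eq_norm, dist_eq_norm, sub_sub_sub_cancel_right]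
      calc |k z * (f (x - z) - f (x' - z))| = k z * |f (x - z) - f (x' - z)| := by
            rw [abs_mul, abs_of_nonneg (hk0 z)]
        _ ≤ k z * (L * dist x x' ^ α) := by
            refine mul_le_mul_of_nonneg_left ?_ (hk0 z)
            have h4 := Hf (x - z) (x' - z); rwa [hd3] at h4
    have h3 : ∫ z, k z * (L * dist x x' ^ α) = L * dist x x' ^ α := by
      rw [integral_mul_const, hktot, one_mul]
    calc |∫ z, k z * (f (x - z) - f (x' - z))|
        ≤ ∫ z, k z * (L * dist x x' ^ α) := h1.trans h2
      _ = L * dist x x' ^ α := h3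
  -- combine
  have hTe : 0 ≤ T ^ e := Real.rpow_nonneg hT0.le _
  have hTee : T ^ (α/2) ≤ T ^ e :=
    Real.rpow_le_rpow_of_exponent_ge hT0 hT1 (by rw [he_def]; linarith)
  have hsup2 : ∀ x, |f x - heat d T f x| ≤ L * M * T ^ e := by
    intro x
    calc |f x - heat d T f x| ≤ L * (M * T ^ (α/2)) := hsupb x
      _ = L * M * T ^ (α/2) := by ring
      _ ≤ L * M * T ^ e := mul_le_mul_of_nonneg_left hTee (mul_nonneg hL hM0.le)
  have hglip : ∀ x x',
      |(f x - heat d T f x) - (f x' - heat d T f x')| ≤ 2 * (L * dist x x' ^ α) := by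
    intro x x'
    calc |(f x - heat d T f x) - (f x' - heat d T f x')|
        = |(f x - f x') - (heat d T f x - heat d T f x')| := by ring_nf
      _ ≤ |f x - f x'| + |heat d T f x - heat d T f x'| := abs_sub _ _
      _ ≤ L * dist x x' ^ α + L * dist x x' ^ α := add_le_add (Hf x x') (hheatlip x x')
      _ = 2 * (L * dist x x' ^ α) := by ring
  have hsemi2 : ∀ x x', x ≠ x' →
      |(f x - heat d T f x) - (f x' - heat d T f x')| / dist x x' ^ β
        ≤ 2 * L * M ^ θ * T ^ e := by
    intro x x' hxx
    have hr0 : (0:ℝ) < dist x x' := dist_pos.2 hxx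
    have hrβ : (0:ℝ) < dist x x' ^ β := Real.rpow_pos_of_pos hr0 _
    have hA0 : (0:ℝ) < M * T ^ (α/2) := mul_pos hM0 (Real.rpow_pos_of_pos hT0 _)
    have hBv0 : (0:ℝ) < dist x x' ^ α := Real.rpow_pos_of_pos hr0 _
    have hAθ : (M * T ^ (α/2)) ^ θ = M ^ θ * T ^ e := by
      rw [Real.mul_rpow hM0.le hTα, ← Real.rpow_mul hT0.le, hexp]
    have hBθ : (dist x x' ^ α) ^ (1-θ) = dist x x' ^ β := by
      rw [← Real.rpow_mul hr0.le, hθ1]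
      congr 1; field_simp
    have hb1 : |(f x - heat d T f x) - (f x' - heat d T f x')|
        ≤ 2 * (L * (M * T ^ (α/2))) := by
      calc |(f x - heat d T f x) - (f x' - heat d T f x')|
          ≤ |f x - heat d T f x| + |f x' - heat d T f x'| := abs_sub _ _
        _ ≤ L * (M * T ^ (α/2)) + L * (M * T ^ (α/2)) := add_le_add (hsupb x) (hsupb x')
        _ = 2 * (L * (M * T ^ (α/2))) := by ring
    have hb2 : |(f x - heat d T f x) - (f x' - heat d T f x')|
        ≤ 2 * (L * dist x x' ^ α) := hglip x x'
    have key : |(f x - heat d T f x) - (f x' - heat d T f x')|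
        ≤ 2 * L * ((M * T ^ (α/2)) ^ θ * (dist x x' ^ α) ^ (1-θ)) := by
      rcases le_total (M * T ^ (α/2)) (dist x x' ^ α) with hAB | hAB
      · have hsplit : (M * T ^ (α/2)) ^ θ * (M * T ^ (α/2)) ^ (1-θ) = M * T ^ (α/2) := by
          rw [← Real.rpow_add hA0, show θ + (1-θ) = (1:ℝ) by ring, Real.rpow_one]
        calc |(f x - heat d T f x) - (f x' - heat d T f x')|
            ≤ 2 * (L * (M * T ^ (α/2))) := hb1
          _ = 2 * L * ((M * T ^ (α/2)) ^ θ * (M * T ^ (α/2)) ^ (1-θ)) := by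
              rw [hsplit]; ring
          _ ≤ 2 * L * ((M * T ^ (α/2)) ^ θ * (dist x x' ^ α) ^ (1-θ)) := by
              refine mul_le_mul_of_nonneg_left
                (mul_le_mul_of_nonneg_left (Real.rpow_le_rpow hA0.le hAB hθ1')
                  (Real.rpow_nonneg hA0.le _)) (by linarith)
      · have hsplit : (dist x x' ^ α) ^ θ * (dist x x' ^ α) ^ (1-θ) = dist x x' ^ α := by
          rw [← Real.rpow_add hBv0, show θ + (1-θ) = (1:ℝ) by ring, Real.rpow_one]
        calc |(f x - heat d T f x) - (f x' - heat d T f x')|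
            ≤ 2 * (L * dist x x' ^ α) := hb2
          _ = 2 * L * ((dist x x' ^ α) ^ θ * (dist x x' ^ α) ^ (1-θ)) := by
              rw [hsplit]; ring
          _ ≤ 2 * L * ((M * T ^ (α/2)) ^ θ * (dist x x' ^ α) ^ (1-θ)) := by
              refine mul_le_mul_of_nonneg_left
                (mul_le_mul_of_nonneg_right (Real.rpow_le_rpow hBv0.le hAB hθ0.le)
                  (Real.rpow_nonneg hBv0.le _)) (by linarith)
    rw [div_le_iff₀ hrβ]
    calc |(f x - heat d T f x) - (f x' - heat d T f x')|
        ≤ 2 * L * ((M * T ^ (α/2)) ^ θ * (dist x x' ^ α) ^ (1-θ)) := key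
      _ = 2 * L * M ^ θ * T ^ e * dist x x' ^ β := by rw [hAθ, hBθ]; ring
  -- assemble in ℝ≥0∞
  have hsupN : supN (fun x => f x - heat d T f x) ≤ ENNReal.ofReal (L * M * T ^ e) := by
    simp only [supN]
    exact iSup_le fun x => ENNReal.ofReal_le_ofReal (hsup2 x)
  have hsemiN : hSemi β (fun x => f x - heat d T f x)
      ≤ ENNReal.ofReal (2 * L * M ^ θ * T ^ e) := by
    simp only [hSemi]
    exact iSup_le fun x => iSup_le fun y => iSup_le fun hxy =>
      ENNReal.ofReal_le_ofReal (hsemi2 x y hxy)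
  have hLle : ENNReal.ofReal L ≤ hNorm α f := by
    rw [hL_def, ENNReal.ofReal_toReal hsemi.ne]
    simp only [hNorm]
    exact self_le_add_left _ _
  have hnn1 : 0 ≤ L * M * T ^ e := mul_nonneg (mul_nonneg hL hM0.le) hTe
  have hnn2 : 0 ≤ 2 * L * M ^ θ * T ^ e :=
    mul_nonneg (mul_nonneg (mul_nonneg (by norm_num) hL) hMθ.le) hTe
  have hnn3 : (0:ℝ) ≤ (2 * M ^ θ + M + 1) * T ^ e :=
    mul_nonneg (by linarith) hTe
  have hTeL : 0 ≤ T ^ e * L := mul_nonneg hTe hL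
  calc hNorm β (fun x => f x - heat d T f x)
      = supN (fun x => f x - heat d T f x) + hSemi β (fun x => f x - heat d T f x) := rfl
    _ ≤ ENNReal.ofReal (L * M * T ^ e) + ENNReal.ofReal (2 * L * M ^ θ * T ^ e) :=
        add_le_add hsupN hsemiN
    _ = ENNReal.ofReal (L * M * T ^ e + 2 * L * M ^ θ * T ^ e) :=
        (ENNReal.ofReal_add hnn1 hnn2).symm
    _ ≤ ENNReal.ofReal ((2 * M ^ θ + M + 1) * T ^ e * L) :=
        ENNReal.ofReal_le_ofReal (by nlinarith)
    _ = ENNReal.ofReal ((2 * M ^ θ + M + 1) * T ^ e) * ENNReal.ofReal L :=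
        ENNReal.ofReal_mul hnn3
    _ ≤ ENNReal.ofReal ((2 * M ^ θ + M + 1) * T ^ e) * hNorm α f :=
        mul_le_mul_right hLle _
end

section
/- Let d ≥ 1, α ∈ (0,1] and β ∈ (0, α). Let a : ℝ → ℝ be twice differentiable with a, a', a'' bounded. There is a constant C depending only on d, α and β such that for every bounded continuous f : ℝ^d → ℝ with finite Hölder seminorm [f]_{C^α} and every T ∈ (0,1], ‖a ∘ f − a ∘ (P_T f)‖_{C^β} ≤ C ‖a‖_{C^2} (1 + ‖f‖_{C^α}) ‖f‖_{C^α} T^{(α−β)/2}. -/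
open scoped ENNReal

/-- The `C^2` norm of `a : ℝ → ℝ`: `sup |a| + sup |a'| + sup |a''|`. -/
noncomputable def c2Norm (a : ℝ → ℝ) : ℝ≥0∞ :=
  supN a + supN (deriv a) + supN (deriv (deriv a))

namespace Stmt10Aux

open MeasureTheory Real


abbrev E (d : ℕ) := EuclideanSpace ℝ (Fin d)

noncomputable def ker (d : ℕ) (T : ℝ) (y : E d) : ℝ :=
  (4 * Real.pi * T) ^ (-(d : ℝ) / 2) * Real.exp (-‖y‖ ^ 2 / (4 * T))

variable {d : ℕ} {T : ℝ}

lemma ker_nonneg (hT : 0 < T) (y : E d) : 0 ≤ ker d T y := by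
  have h : (0:ℝ) < 4 * Real.pi * T := by positivity
  unfold ker; positivity

lemma ker_continuous (hT : 0 < T) : Continuous (ker d T) := by
  unfold ker
  exact continuous_const.mul (Real.continuous_exp.comp
    (((continuous_norm.pow 2).neg).div_const _))

lemma integrable_gauss (d : ℕ) {b : ℝ} (hb : 0 < b) :
    Integrable (fun v : E d => rexp (-b * ‖v‖ ^ 2)) := by
  have := (GaussianFourier.integrable_cexp_neg_mul_sq_norm_add
    (b := (b : ℂ)) (by simpa using hb) 0 (0 : E d)).norm
  simpa [Complex.norm_exp, ← Complex.ofReal_pow] using this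

lemma integral_gauss (d : ℕ) {b : ℝ} (hb : 0 < b) :
    ∫ v : E d, rexp (-b * ‖v‖ ^ 2) = (π / b) ^ ((d : ℝ) / 2 : ℝ) := by
  rw [GaussianFourier.integral_rexp_neg_mul_sq_norm hb]
  norm_num [finrank_euclideanSpace_fin]

lemma ker_eq (hT : 0 < T) (y : E d) :
    ker d T y = (4 * Real.pi * T) ^ (-(d : ℝ) / 2) * rexp (-(1/(4*T)) * ‖y‖ ^ 2) := by
  unfold ker
  congr 2
  field_simp

lemma integrable_ker (hT : 0 < T) : Integrable (ker d T) := by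
  have hb : (0:ℝ) < 1/(4*T) := by positivity
  have : Integrable (fun y : E d =>
      (4 * Real.pi * T) ^ (-(d : ℝ) / 2) * rexp (-(1/(4*T)) * ‖y‖ ^ 2)) :=
    (integrable_gauss d hb).const_mul _
  exact this.congr (Filter.Eventually.of_forall fun y => (ker_eq hT y).symm)

lemma integral_ker (hT : 0 < T) : ∫ y, ker d T y = 1 := by
  have hb : (0:ℝ) < 1/(4*T) := by positivity
  have h4T : (0:ℝ) < 4 * Real.pi * T := by positivity
  have h1 : ∫ y, ker d T y = (4 * Real.pi * T) ^ (-(d : ℝ) / 2) *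
      ∫ y : E d, rexp (-(1/(4*T)) * ‖y‖ ^ 2) := by
    rw [← integral_const_mul]
    exact integral_congr_ae (Filter.Eventually.of_forall fun y => ker_eq hT y)
  rw [h1, integral_gauss d hb]
  have h2 : π / (1/(4*T)) = 4 * Real.pi * T := by field_simp
  rw [h2, ← Real.rpow_add h4T, neg_div, neg_add_cancel, Real.rpow_zero]

lemma integrable_ker_mul (hT : 0 < T) {f : E d → ℝ} (hf : Continuous f)
    {M : ℝ} (hM : ∀ x, |f x| ≤ M) :
    Integrable (fun y => ker d T y * f y) := by
  have h := (integrable_ker (d := d) hT).bdd_mul hf.aestronglyMeasurable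
    (Filter.Eventually.of_forall fun x => by simpa using hM x)
  exact h.congr (Filter.Eventually.of_forall fun y => mul_comm _ _)

lemma heat_eq' (hT : 0 < T) (f : E d → ℝ) (x : E d) :
    (∫ y, (4 * Real.pi * T) ^ (-(d : ℝ) / 2) * Real.exp (-‖x - y‖ ^ 2 / (4 * T)) * f y)
      = ∫ z, ker d T z * f (x - z) := by
  rw [← integral_sub_left_eq_self (fun z => ker d T z * f (x - z)) volume x]
  simp only [ker, sub_sub_cancel]

lemma abs_integral_ker_mul_le (hT : 0 < T) {g : E d → ℝ}
    (hg : Integrable (fun z => ker d T z * g z)) {B : ℝ} (hB : ∀ z, |g z| ≤ B) :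
    |∫ z, ker d T z * g z| ≤ B := by
  have h1 : |∫ z, ker d T z * g z| ≤ ∫ z, |ker d T z * g z| := by
    simpa only [Real.norm_eq_abs] using
      norm_integral_le_integral_norm (μ := volume) (fun z => ker d T z * g z)
  have h2 : ∫ z, |ker d T z * g z| ≤ ∫ z, ker d T z * B := by
    refine integral_mono hg.abs ((integrable_ker hT).mul_const B) fun z => ?_
    rw [abs_mul, abs_of_nonneg (ker_nonneg hT z)]
    exact mul_le_mul_of_nonneg_left (hB z) (ker_nonneg hT z)
  have h3 : ∫ z, ker d T z * B = B := by
    rw [integral_mul_const, integral_ker hT, one_mul]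
  linarith

lemma moment_pointwise (hT : 0 < T) {α : ℝ} (hα0 : 0 < α) (hα1 : α ≤ 1) (z : E d) :
    ker d T z * ‖z‖ ^ α ≤
      3 * T ^ (α/2) * ((4 * Real.pi * T) ^ (-(d : ℝ) / 2) * rexp (-(1/(8*T)) * ‖z‖ ^ 2)) := by
  have hsT : (0:ℝ) < Real.sqrt T := Real.sqrt_pos.2 hT
  set u : ℝ := ‖z‖ / Real.sqrt T with hu
  have hu0 : 0 ≤ u := by positivity
  have hz : ‖z‖ = u * Real.sqrt T := by rw [hu]; field_simp
  have hz2 : ‖z‖ ^ 2 = u ^ 2 * T := by rw [hz, mul_pow, Real.sq_sqrt hT.le]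
  have hsplit : rexp (-‖z‖ ^ 2 / (4*T)) =
      rexp (-(1/(8*T)) * ‖z‖ ^ 2) * rexp (-(1/(8*T)) * ‖z‖ ^ 2) := by
    rw [← Real.exp_add]
    congr 1
    field_simp
    ring
  have hkey : ‖z‖ ^ α * rexp (-(1/(8*T)) * ‖z‖ ^ 2) ≤ 3 * T ^ (α/2) := by
    have h1 : ‖z‖ ^ α = u ^ α * T ^ (α/2) := by
      rw [hz, Real.mul_rpow hu0 hsT.le, Real.sqrt_eq_rpow, ← Real.rpow_mul hT.le]
      norm_num
      exact Or.inl (by ring_nf)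
    have h2 : -(1/(8*T)) * ‖z‖ ^ 2 = -(u ^ 2 / 8) := by
      rw [hz2]; field_simp
    have huα : u ^ α ≤ 1 + u := by
      rcases le_total u 1 with h | h
      · have := Real.rpow_le_one hu0 h hα0.le
        linarith
      · calc u ^ α ≤ u ^ (1:ℝ) := Real.rpow_le_rpow_of_exponent_le h hα1
          _ = u := Real.rpow_one u
          _ ≤ 1 + u := by linarith
    have hpos : (0:ℝ) < 1 + u ^ 2 / 8 := by positivity
    have hexp : rexp (-(u ^ 2 / 8)) ≤ (1 + u ^ 2 / 8)⁻¹ := by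
      rw [Real.exp_neg]
      exact inv_anti₀ hpos (by linarith [Real.add_one_le_exp (u ^ 2 / 8)])
    have h3 : u ^ α * rexp (-(u ^ 2 / 8)) ≤ (1 + u) * (1 + u ^ 2 / 8)⁻¹ :=
      mul_le_mul huα hexp (Real.exp_pos _).le (by linarith)
    have h4 : (1 + u) * (1 + u ^ 2 / 8)⁻¹ ≤ 3 := by
      rw [← div_eq_mul_inv, div_le_iff₀ hpos]
      nlinarith
    have hT' : (0:ℝ) ≤ T ^ (α/2) := (Real.rpow_pos_of_pos hT _).le
    calc ‖z‖ ^ α * rexp (-(1/(8*T)) * ‖z‖ ^ 2)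
        = u ^ α * rexp (-(u ^ 2/8)) * T ^ (α/2) := by rw [h1, h2]; ring
      _ ≤ 3 * T ^ (α/2) := by nlinarith
  have hC : (0:ℝ) ≤ (4 * Real.pi * T) ^ (-(d : ℝ) / 2) := by
    have : (0:ℝ) < 4 * Real.pi * T := by positivity
    positivity
  calc ker d T z * ‖z‖ ^ α
      = ((4 * Real.pi * T) ^ (-(d : ℝ) / 2) * rexp (-(1/(8*T)) * ‖z‖ ^ 2)) *
        (‖z‖ ^ α * rexp (-(1/(8*T)) * ‖z‖ ^ 2)) := by
        unfold ker; rw [hsplit]; ring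
    _ ≤ ((4 * Real.pi * T) ^ (-(d : ℝ) / 2) * rexp (-(1/(8*T)) * ‖z‖ ^ 2)) * (3 * T ^ (α/2)) := by
        refine mul_le_mul_of_nonneg_left hkey ?_
        positivity
    _ = 3 * T ^ (α/2) * ((4 * Real.pi * T) ^ (-(d : ℝ) / 2) * rexp (-(1/(8*T)) * ‖z‖ ^ 2)) := by
        ring

lemma integrable_moment (hT : 0 < T) {α : ℝ} (hα0 : 0 < α) (hα1 : α ≤ 1) :
    Integrable (fun z : E d => ker d T z * ‖z‖ ^ α) := by
  have hb : (0:ℝ) < 1/(8*T) := by positivity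
  have hg : Integrable (fun z : E d =>
      3 * T ^ (α/2) * ((4 * Real.pi * T) ^ (-(d : ℝ) / 2) * rexp (-(1/(8*T)) * ‖z‖ ^ 2))) := by
    simpa [mul_assoc] using ((integrable_gauss d hb).const_mul
      (3 * T ^ (α/2) * (4 * Real.pi * T) ^ (-(d : ℝ) / 2)))
  refine hg.mono' ?_ (Filter.Eventually.of_forall fun z => ?_)
  · exact ((ker_continuous hT).mul
      (continuous_norm.rpow_const fun z => Or.inr hα0.le)).aestronglyMeasurable
  · have h0 : 0 ≤ ker d T z * ‖z‖ ^ α :=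
      mul_nonneg (ker_nonneg hT z) (Real.rpow_nonneg (norm_nonneg z) α)
    rw [Real.norm_eq_abs, abs_of_nonneg h0]
    exact moment_pointwise hT hα0 hα1 z

lemma integral_moment (hT : 0 < T) {α : ℝ} (hα0 : 0 < α) (hα1 : α ≤ 1) :
    ∫ z : E d, ker d T z * ‖z‖ ^ α ≤ 3 * 2 ^ ((d:ℝ)/2) * T ^ (α/2) := by
  have hb : (0:ℝ) < 1/(8*T) := by positivity
  have h4T : (0:ℝ) < 4 * Real.pi * T := by positivity
  have hg : Integrable (fun z : E d =>
      3 * T ^ (α/2) * ((4 * Real.pi * T) ^ (-(d : ℝ) / 2) * rexp (-(1/(8*T)) * ‖z‖ ^ 2))) := by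
    simpa [mul_assoc] using ((integrable_gauss d hb).const_mul
      (3 * T ^ (α/2) * (4 * Real.pi * T) ^ (-(d : ℝ) / 2)))
  have h1 : ∫ z : E d, ker d T z * ‖z‖ ^ α ≤
      ∫ z : E d, 3 * T ^ (α/2) * ((4 * Real.pi * T) ^ (-(d : ℝ) / 2) *
        rexp (-(1/(8*T)) * ‖z‖ ^ 2)) :=
    integral_mono (integrable_moment hT hα0 hα1) hg
      (fun z => moment_pointwise hT hα0 hα1 z)
  have h2 : ∫ z : E d, 3 * T ^ (α/2) * ((4 * Real.pi * T) ^ (-(d : ℝ) / 2) *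
      rexp (-(1/(8*T)) * ‖z‖ ^ 2)) = 3 * 2 ^ ((d:ℝ)/2) * T ^ (α/2) := by
    have hi : ∫ z : E d, rexp (-(1/(8*T)) * ‖z‖ ^ 2) = (8 * Real.pi * T) ^ ((d:ℝ)/2) := by
      rw [integral_gauss d hb]
      congr 1
      field_simp
    calc ∫ z : E d, 3 * T ^ (α/2) * ((4 * Real.pi * T) ^ (-(d : ℝ) / 2) *
        rexp (-(1/(8*T)) * ‖z‖ ^ 2))
        = 3 * T ^ (α/2) * (4 * Real.pi * T) ^ (-(d : ℝ) / 2) *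
          ∫ z : E d, rexp (-(1/(8*T)) * ‖z‖ ^ 2) := by
          rw [← integral_const_mul]
          congr 1
          funext z
          ring
      _ = 3 * T ^ (α/2) * ((4 * Real.pi * T) ^ (-(d : ℝ) / 2) *
          (8 * Real.pi * T) ^ ((d:ℝ)/2)) := by rw [hi]; ring
      _ = 3 * 2 ^ ((d:ℝ)/2) * T ^ (α/2) := by
          have h8 : (8 : ℝ) * Real.pi * T = 2 * (4 * Real.pi * T) := by ring
          have hone : (4 * Real.pi * T) ^ (-(d:ℝ)/2) * (4 * Real.pi * T) ^ ((d:ℝ)/2) = 1 := by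
            rw [← Real.rpow_add h4T, neg_div, neg_add_cancel, Real.rpow_zero]
          rw [h8, Real.mul_rpow (by norm_num) h4T.le]
          linear_combination (3 * T ^ (α/2) * (2:ℝ) ^ ((d:ℝ)/2)) * hone
  linarith

variable {d : ℕ} {T : ℝ}
lemma dist_norm_aux (x z : E d) : dist (x - z) x = ‖z‖ := by
  rw [dist_eq_norm]
  simp

lemma heat_sub_le (hT : 0 < T) {f : E d → ℝ} (hf : Continuous f)
    {M L α : ℝ} (hM : ∀ x, |f x| ≤ M) (hL : 0 ≤ L) (hα0 : 0 < α) (hα1 : α ≤ 1)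
    (hLf : ∀ x y, |f x - f y| ≤ L * dist x y ^ α) (x : E d) :
    |heat d T f x - f x| ≤ L * (3 * 2 ^ ((d:ℝ)/2) * T ^ (α/2)) := by
  have hfx : Continuous fun z : E d => f (x - z) :=
    hf.comp (continuous_const.sub continuous_id)
  have h1 : Integrable (fun z : E d => ker d T z * f (x - z)) :=
    integrable_ker_mul hT hfx (fun z => hM _)
  have h2 : Integrable (fun z : E d => ker d T z * f x) := (integrable_ker hT).mul_const _
  have hdiff : Integrable (fun z : E d => ker d T z * (f (x - z) - f x)) :=
    (h1.sub h2).congr (Filter.Eventually.of_forall fun z => (mul_sub _ _ _).symm)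
  have heq : heat d T f x - f x = ∫ z, ker d T z * (f (x - z) - f x) := by
    have e1 : heat d T f x = ∫ z, ker d T z * f (x - z) := heat_eq' hT f x
    have e2 : ∫ z, ker d T z * (f (x - z) - f x)
        = (∫ z, ker d T z * f (x - z)) - ∫ z, ker d T z * f x := by
      rw [← integral_sub h1 h2]
      congr 1
      funext z
      ring
    rw [e2, ← e1, integral_mul_const, integral_ker hT, one_mul]
  rw [heq]
  have hmono : |∫ z, ker d T z * (f (x - z) - f x)|
      ≤ ∫ z, |ker d T z * (f (x - z) - f x)| := by
    simpa only [Real.norm_eq_abs] using norm_integral_le_integral_norm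
      (μ := volume) (fun z => ker d T z * (f (x - z) - f x))
  have hintm : Integrable (fun z : E d => ker d T z * (L * ‖z‖ ^ α)) :=
    ((integrable_moment hT hα0 hα1).const_mul L).congr
      (Filter.Eventually.of_forall fun z => by ring)
  have h3 : ∫ z, |ker d T z * (f (x - z) - f x)| ≤ ∫ z, ker d T z * (L * ‖z‖ ^ α) := by
    refine integral_mono hdiff.abs hintm fun z => ?_
    rw [abs_mul, abs_of_nonneg (ker_nonneg hT z)]
    refine mul_le_mul_of_nonneg_left ?_ (ker_nonneg hT z)
    have := hLf (x - z) x
    rwa [dist_norm_aux] at this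
  have h4 : ∫ z, ker d T z * (L * ‖z‖ ^ α) = L * ∫ z, ker d T z * ‖z‖ ^ α := by
    rw [← integral_const_mul]
    congr 1
    funext z
    ring
  have h5 := integral_moment (d := d) hT hα0 hα1
  have h6 : L * (∫ z : E d, ker d T z * ‖z‖ ^ α) ≤ L * (3 * 2 ^ ((d:ℝ)/2) * T ^ (α/2)) :=
    mul_le_mul_of_nonneg_left h5 hL
  calc |∫ z, ker d T z * (f (x - z) - f x)| ≤ ∫ z, |ker d T z * (f (x - z) - f x)| := hmono
    _ ≤ ∫ z, ker d T z * (L * ‖z‖ ^ α) := h3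
    _ = L * ∫ z, ker d T z * ‖z‖ ^ α := h4
    _ ≤ L * (3 * 2 ^ ((d:ℝ)/2) * T ^ (α/2)) := h6

lemma heat_holder (hT : 0 < T) {f : E d → ℝ} (hf : Continuous f)
    {M L α : ℝ} (hM : ∀ x, |f x| ≤ M)
    (hLf : ∀ x y, |f x - f y| ≤ L * dist x y ^ α) (x y : E d) :
    |heat d T f x - heat d T f y| ≤ L * dist x y ^ α := by
  have h1 : Integrable (fun z : E d => ker d T z * f (x - z)) :=
    integrable_ker_mul hT (hf.comp (continuous_const.sub continuous_id)) (fun z => hM _)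
  have h2 : Integrable (fun z : E d => ker d T z * f (y - z)) :=
    integrable_ker_mul hT (hf.comp (continuous_const.sub continuous_id)) (fun z => hM _)
  have heq : heat d T f x - heat d T f y = ∫ z, ker d T z * (f (x - z) - f (y - z)) := by
    have e1 : heat d T f x = ∫ z, ker d T z * f (x - z) := heat_eq' hT f x
    have e2 : heat d T f y = ∫ z, ker d T z * f (y - z) := heat_eq' hT f y
    rw [e1, e2, ← integral_sub h1 h2]
    congr 1
    funext z
    ring
  rw [heq]
  refine abs_integral_ker_mul_le hT ?_ fun z => ?_
  · exact (h1.sub h2).congr (Filter.Eventually.of_forall fun z => (mul_sub _ _ _).symm)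
  · have := hLf (x - z) (y - z)
    rwa [dist_sub_right] at this

end Stmt10Aux

open MeasureTheory Real Stmt10Aux in
theorem stmt_10 (d : ℕ) (hd : 1 ≤ d) (α β : ℝ) (hα0 : 0 < α) (hα1 : α ≤ 1)
    (hβ0 : 0 < β) (hβα : β < α) :
    ∃ C : ℝ, 0 < C ∧
      ∀ a : ℝ → ℝ, Differentiable ℝ a → Differentiable ℝ (deriv a) →
        supN a < ⊤ → supN (deriv a) < ⊤ → supN (deriv (deriv a)) < ⊤ →
          ∀ f : EuclideanSpace ℝ (Fin d) → ℝ, Continuous f → supN f < ⊤ → hSemi α f < ⊤ →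
            ∀ T : ℝ, 0 < T → T ≤ 1 →
              hNorm β (fun x => a (f x) - a (heat d T f x)) ≤
                ENNReal.ofReal C * c2Norm a * (1 + hNorm α f) * hNorm α f *
                  ENNReal.ofReal (T ^ ((α - β) / 2)) := by
  have hKd0 : (0:ℝ) < 3 * 2 ^ ((d:ℝ)/2) := by positivity
  set Kd : ℝ := 3 * 2 ^ ((d:ℝ)/2) with hKd
  refine ⟨3 * Kd + 2, by linarith, ?_⟩
  intro a ha ha2 hsa hsa' hsa'' f hf hsf hhf T hT0 hT1
  set T' : ℝ := T ^ ((α - β) / 2) with hT'def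
  have hT'0 : 0 < T' := Real.rpow_pos_of_pos hT0 _
  -- constants
  set A1 : ℝ := (supN (deriv a)).toReal with hA1def
  have hA1_0 : 0 ≤ A1 := ENNReal.toReal_nonneg
  have hA1 : ∀ s, |deriv a s| ≤ A1 := by
    intro s
    have h : ENNReal.ofReal |deriv a s| ≤ supN (deriv a) :=
      le_iSup (fun t => ENNReal.ofReal |deriv a t|) s
    rw [← ENNReal.ofReal_toReal hsa'.ne] at h
    exact (ENNReal.ofReal_le_ofReal_iff ENNReal.toReal_nonneg).mp h
  set M : ℝ := (supN f).toReal with hMdef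
  have hM : ∀ x, |f x| ≤ M := by
    intro x
    have h : ENNReal.ofReal |f x| ≤ supN f := le_iSup (fun t => ENNReal.ofReal |f t|) x
    rw [← ENNReal.ofReal_toReal hsf.ne] at h
    exact (ENNReal.ofReal_le_ofReal_iff ENNReal.toReal_nonneg).mp h
  set L : ℝ := (hSemi α f).toReal with hLdef
  have hL0 : 0 ≤ L := ENNReal.toReal_nonneg
  have hLf : ∀ x y, |f x - f y| ≤ L * dist x y ^ α := by
    intro x y
    rcases eq_or_ne x y with rfl | hxy
    · simp [Real.zero_rpow hα0.ne']
    · have h : ENNReal.ofReal (|f x - f y| / dist x y ^ α) ≤ hSemi α f :=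
        le_iSup_of_le x (le_iSup_of_le y (le_iSup_of_le hxy le_rfl))
      rw [← ENNReal.ofReal_toReal hhf.ne] at h
      have h2 := (ENNReal.ofReal_le_ofReal_iff ENNReal.toReal_nonneg).mp h
      rwa [div_le_iff₀ (Real.rpow_pos_of_pos (dist_pos.2 hxy) α)] at h2
  -- Lipschitz property of a
  have haLip : ∀ s t : ℝ, |a s - a t| ≤ A1 * |s - t| := by
    intro s t
    have h := Convex.norm_image_sub_le_of_norm_deriv_le (s := Set.univ)
      (fun x _ => ha x) (fun x _ => hA1 x) convex_univ (Set.mem_univ t) (Set.mem_univ s)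
    simpa [Real.norm_eq_abs] using h
  -- heat bounds
  have hheat1 : ∀ x, |heat d T f x - f x| ≤ L * (Kd * T ^ (α/2)) := by
    intro x
    have h := heat_sub_le hT0 hf hM hL0 hα0 hα1 hLf x
    rw [← hKd] at h
    linarith [h]
  have hheat2 : ∀ x y, |heat d T f x - heat d T f y| ≤ L * dist x y ^ α :=
    fun x y => heat_holder hT0 hf hM hLf x y
  set g : EuclideanSpace ℝ (Fin d) → ℝ := fun x => a (f x) - a (heat d T f x) with hgdef
  have hTle : T ^ (α/2) ≤ T' := Real.rpow_le_rpow_of_exponent_ge hT0 hT1 (by linarith)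
  -- sup bound for g
  have hgS : ∀ x, |g x| ≤ A1 * L * Kd * T ^ (α/2) := by
    intro x
    calc |g x| = |a (f x) - a (heat d T f x)| := rfl
      _ ≤ A1 * |f x - heat d T f x| := haLip _ _
      _ = A1 * |heat d T f x - f x| := by rw [abs_sub_comm]
      _ ≤ A1 * (L * (Kd * T ^ (α/2))) := mul_le_mul_of_nonneg_left (hheat1 x) hA1_0
      _ = A1 * L * Kd * T ^ (α/2) := by ring
  have hgS' : ∀ x, |g x| ≤ A1 * L * Kd * T' := by
    intro x
    have h2 : A1 * L * Kd * T ^ (α/2) ≤ A1 * L * Kd * T' :=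
      mul_le_mul_of_nonneg_left hTle
        (mul_nonneg (mul_nonneg hA1_0 hL0) hKd0.le)
    linarith [hgS x]
  -- Hölder bound for g
  have hg_h : ∀ x y, x ≠ y → |g x - g y| ≤ 2 * A1 * L * (Kd + 1) * T' * dist x y ^ β := by
    intro x y hxy
    have hr0 : 0 < dist x y := dist_pos.2 hxy
    have hrβ0 : (0:ℝ) ≤ dist x y ^ β := Real.rpow_nonneg dist_nonneg β
    rcases le_total T (dist x y ^ 2) with hcase | hcase
    · -- large distance : use the sup bound
      have hrT : Real.sqrt T ≤ dist x y := by
        have h := Real.sqrt_le_sqrt hcase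
        rwa [Real.sqrt_sq dist_nonneg] at h
      have hTb : T ^ (β/2) ≤ dist x y ^ β := by
        have h1 : T ^ (β/2) = (Real.sqrt T) ^ β := by
          rw [Real.sqrt_eq_rpow, ← Real.rpow_mul hT0.le, show 1/2*β = β/2 by ring]
        rw [h1]
        exact Real.rpow_le_rpow (Real.sqrt_nonneg T) hrT hβ0.le
      have hTs : T ^ (β/2) * T' = T ^ (α/2) := by
        rw [hT'def, ← Real.rpow_add hT0]
        congr 1
        ring
      have hstep : A1 * L * Kd * T ^ (α/2) ≤ A1 * L * Kd * (dist x y ^ β * T') := by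
        rw [← hTs, mul_comm (T ^ (β/2)) T']
        refine mul_le_mul_of_nonneg_left ?_ (mul_nonneg (mul_nonneg hA1_0 hL0) hKd0.le)
        calc T' * T ^ (β/2) ≤ T' * dist x y ^ β := mul_le_mul_of_nonneg_left hTb hT'0.le
          _ = dist x y ^ β * T' := mul_comm _ _
      have htri : |g x - g y| ≤ |g x| + |g y| := abs_sub _ _
      have hnn : (0:ℝ) ≤ A1 * L * (T' * dist x y ^ β) :=
        mul_nonneg (mul_nonneg hA1_0 hL0) (mul_nonneg hT'0.le hrβ0)
      nlinarith [hgS x, hgS y, hstep]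
    · -- small distance : use the Hölder bounds
      have hrT : dist x y ≤ Real.sqrt T := by
        have h := Real.sqrt_le_sqrt hcase
        rwa [Real.sqrt_sq dist_nonneg] at h
      have hra : dist x y ^ (α - β) ≤ T' := by
        have h1 : (Real.sqrt T) ^ (α - β) = T' := by
          rw [hT'def, Real.sqrt_eq_rpow, ← Real.rpow_mul hT0.le,
            show 1/2*(α-β) = (α-β)/2 by ring]
        rw [← h1]
        exact Real.rpow_le_rpow dist_nonneg hrT (by linarith)
      have hsplit : dist x y ^ α = dist x y ^ β * dist x y ^ (α - β) := by
        rw [← Real.rpow_add hr0]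
        congr 1
        ring
      have h1 : |a (f x) - a (f y)| ≤ A1 * (L * dist x y ^ α) :=
        (haLip _ _).trans (mul_le_mul_of_nonneg_left (hLf x y) hA1_0)
      have h2 : |a (heat d T f x) - a (heat d T f y)| ≤ A1 * (L * dist x y ^ α) :=
        (haLip _ _).trans (mul_le_mul_of_nonneg_left (hheat2 x y) hA1_0)
      have htri : |g x - g y| ≤ |a (f x) - a (f y)| + |a (heat d T f x) - a (heat d T f y)| := by
        have : g x - g y = (a (f x) - a (f y)) - (a (heat d T f x) - a (heat d T f y)) := by
          simp only [hgdef]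
          ring
        rw [this]
        exact abs_sub _ _
      have hmul : A1 * (L * dist x y ^ α) ≤ A1 * L * (dist x y ^ β * T') := by
        rw [hsplit]
        have := mul_le_mul_of_nonneg_left hra hrβ0
        nlinarith [mul_le_mul_of_nonneg_left this (mul_nonneg hA1_0 hL0)]
      have hnn : (0:ℝ) ≤ A1 * L * (T' * dist x y ^ β) :=
        mul_nonneg (mul_nonneg hA1_0 hL0) (mul_nonneg hT'0.le hrβ0)
      nlinarith [htri, h1, h2, hmul, mul_nonneg (mul_nonneg (mul_nonneg hA1_0 hL0) (mul_nonneg hT'0.le hrβ0)) hKd0.le]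
  -- assemble the ENNReal estimate
  have hSnn : (0:ℝ) ≤ A1 * L * Kd * T' := mul_nonneg (mul_nonneg (mul_nonneg hA1_0 hL0) hKd0.le) hT'0.le
  have hHnn : (0:ℝ) ≤ 2 * A1 * L * (Kd + 1) * T' := by positivity
  have hLHS : hNorm β g ≤ ENNReal.ofReal ((3 * Kd + 2) * (A1 * (L * T'))) := by
    have hs : supN g ≤ ENNReal.ofReal (A1 * L * Kd * T') := by
      refine iSup_le fun x => ?_
      exact ENNReal.ofReal_le_ofReal (hgS' x)
    have hh : hSemi β g ≤ ENNReal.ofReal (2 * A1 * L * (Kd + 1) * T') := by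
      refine iSup_le fun x => iSup_le fun y => iSup_le fun hxy => ENNReal.ofReal_le_ofReal ?_
      rw [div_le_iff₀ (Real.rpow_pos_of_pos (dist_pos.2 hxy) β)]
      exact hg_h x y hxy
    calc hNorm β g ≤ ENNReal.ofReal (A1 * L * Kd * T') +
        ENNReal.ofReal (2 * A1 * L * (Kd + 1) * T') := add_le_add hs hh
      _ = ENNReal.ofReal ((3 * Kd + 2) * (A1 * (L * T'))) := by
          rw [← ENNReal.ofReal_add hSnn hHnn]
          congr 1
          ring
  have hRHS : ENNReal.ofReal ((3 * Kd + 2) * (A1 * (L * T'))) ≤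
      ENNReal.ofReal (3 * Kd + 2) * c2Norm a * (1 + hNorm α f) * hNorm α f *
        ENNReal.ofReal T' := by
    rw [ENNReal.ofReal_mul (by linarith : (0:ℝ) ≤ 3 * Kd + 2), ENNReal.ofReal_mul hA1_0,
      ENNReal.ofReal_mul hL0]
    have h1 : ENNReal.ofReal A1 ≤ c2Norm a := by
      rw [hA1def, ENNReal.ofReal_toReal hsa'.ne]
      calc supN (deriv a) ≤ supN a + supN (deriv a) := self_le_add_left _ _
        _ ≤ supN a + supN (deriv a) + supN (deriv (deriv a)) := self_le_add_right _ _
    have h2 : ENNReal.ofReal L ≤ hNorm α f := by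
      rw [hLdef, ENNReal.ofReal_toReal hhf.ne]
      exact self_le_add_left _ _
    have h3 : (1 : ℝ≥0∞) ≤ 1 + hNorm α f := self_le_add_right _ _
    calc ENNReal.ofReal (3 * Kd + 2) * (ENNReal.ofReal A1 * (ENNReal.ofReal L * ENNReal.ofReal T'))
        = ENNReal.ofReal (3 * Kd + 2) * ENNReal.ofReal A1 * 1 * ENNReal.ofReal L *
          ENNReal.ofReal T' := by ring
      _ ≤ ENNReal.ofReal (3 * Kd + 2) * c2Norm a * (1 + hNorm α f) * hNorm α f *
          ENNReal.ofReal T' :=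
        mul_le_mul' (mul_le_mul' (mul_le_mul' (mul_le_mul' le_rfl h1) h3) h2) le_rfl
  exact hLHS.trans hRHS
end
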